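/- Let q > 1. The function φ̃_q(x) = ψ_q(x) + ln(exp((ln q)/(q^x − 1)) − 1) is strictly increasing with respect to x on (0, ∞). -/

import Mathlib

open Real Set Filter Topology

/-- The q-digamma function for `q > 1`:
`ψ_q(x) = −ln(q−1) + (ln q)·(x − 1/2 − ∑_{k=1}^∞ q^{−kx}/(1 − q^{−k}))`. -/
noncomputable def qDigammaGt (q x : ℝ) : ℝ :=
  -Real.log (q - 1) +
    Real.log q *
      (x - 1 / 2 - ∑' k : ℕ, q ^ (-(((k : ℝ) + 1) * x)) / (1 - q ^ (-((k : ℝ) + 1))))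



noncomputable def hfun (u : ℝ) : ℝ := u / (1 - Real.exp (-u))
noncomputable def hderiv (u : ℝ) : ℝ :=
  (1 - Real.exp (-u) - u * Real.exp (-u)) / (1 - Real.exp (-u)) ^ 2
noncomputable def pfun (u : ℝ) : ℝ := u - 2 + (2 + u) * Real.exp (-u)

lemma vpos {u : ℝ} (hu : 0 < u) : 0 < 1 - Real.exp (-u) := by
  have : Real.exp (-u) < 1 := by
    rw [Real.exp_lt_one_iff]; linarith
  linarith

lemma expneg_hasDerivAt (u : ℝ) :
    HasDerivAt (fun v : ℝ => 1 - Real.exp (-v)) (Real.exp (-u)) u := by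
  have h1 : HasDerivAt (fun v : ℝ => Real.exp (-v)) (-Real.exp (-u)) u := by
    exact (Real.hasDerivAt_exp (-u)).comp u ((hasDerivAt_id u).neg) |>.congr_deriv (by simp)
  simpa using (h1.const_sub 1)

lemma hfun_hasDerivAt {u : ℝ} (hu : 0 < u) : HasDerivAt hfun (hderiv u) u := by
  have h := (hasDerivAt_id u).div (expneg_hasDerivAt u) (vpos hu).ne'
  refine h.congr_deriv ?_
  unfold hderiv
  simp only [id_eq]
  ring

lemma pfun_hasDerivAt (u : ℝ) :
    HasDerivAt pfun (1 - (1 + u) * Real.exp (-u)) u := by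
  have h1 : HasDerivAt (fun v : ℝ => Real.exp (-v)) (-Real.exp (-u)) u := by
    exact (Real.hasDerivAt_exp (-u)).comp u ((hasDerivAt_id u).neg) |>.congr_deriv (by simp)
  have h2 : HasDerivAt (fun v : ℝ => (2 + v) * Real.exp (-v))
      (1 * Real.exp (-u) + (2 + u) * -Real.exp (-u)) u :=
    (((hasDerivAt_id u).const_add 2)).mul h1
  have h3 : HasDerivAt (fun v : ℝ => v - 2) (1 : ℝ) u := (hasDerivAt_id u).sub_const 2
  have := h3.add h2
  refine this.congr_deriv ?_
  ring

lemma pfun_nonneg {u : ℝ} (hu : 0 ≤ u) : 0 ≤ pfun u := by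
  have hmono : MonotoneOn pfun (Ici (0:ℝ)) := by
    apply monotoneOn_of_deriv_nonneg (convex_Ici 0)
    · exact fun x _ => ((pfun_hasDerivAt x).continuousAt).continuousWithinAt
    · intro x hx
      exact ((pfun_hasDerivAt x).differentiableAt).differentiableWithinAt
    · intro x hx
      rw [interior_Ici] at hx
      rw [(pfun_hasDerivAt x).deriv]
      have h1 : (1 + x) * Real.exp (-x) ≤ 1 := by
        have := Real.add_one_le_exp x
        have hp : 0 < Real.exp x := Real.exp_pos x
        rw [Real.exp_neg]
        rw [mul_inv_le_iff₀ hp]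
        linarith
      linarith
  have h0 : pfun 0 = 0 := by simp [pfun]
  have := hmono (self_mem_Ici) (mem_Ici.2 hu) hu
  rwa [h0] at this


lemma hderiv_hasDerivAt {u : ℝ} (hu : 0 < u) :
    HasDerivAt hderiv (Real.exp (-u) * pfun u / (1 - Real.exp (-u)) ^ 3) u := by
  have hv := vpos hu
  have h1 : HasDerivAt (fun v : ℝ => Real.exp (-v)) (-Real.exp (-u)) u := by
    exact (Real.hasDerivAt_exp (-u)).comp u ((hasDerivAt_id u).neg) |>.congr_deriv (by simp)
  have hN : HasDerivAt (fun v : ℝ => 1 - Real.exp (-v) - v * Real.exp (-v))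
      (Real.exp (-u) - (1 * Real.exp (-u) + u * -Real.exp (-u))) u :=
    (expneg_hasDerivAt u).sub ((hasDerivAt_id u).mul h1)
  have hDen : HasDerivAt (fun v : ℝ => (1 - Real.exp (-v)) ^ 2)
      (2 * (1 - Real.exp (-u)) ^ 1 * Real.exp (-u)) u := by
    exact (expneg_hasDerivAt u).pow 2
  have hden_ne : ((1 - Real.exp (-u)) ^ 2) ≠ 0 := by positivity
  have h := hN.div hDen hden_ne
  refine h.congr_deriv ?_
  have : pfun u = u - 2 + (2 + u) * Real.exp (-u) := rfl
  rw [this]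
  field_simp
  ring

lemma hderiv_mono : MonotoneOn hderiv (Ioi (0:ℝ)) := by
  apply monotoneOn_of_deriv_nonneg (convex_Ioi 0)
  · exact fun x hx => ((hderiv_hasDerivAt hx).continuousAt).continuousWithinAt
  · intro x hx
    rw [interior_Ioi] at hx
    exact ((hderiv_hasDerivAt hx).differentiableAt).differentiableWithinAt
  · intro x hx
    rw [interior_Ioi] at hx
    rw [(hderiv_hasDerivAt hx).deriv]
    have := pfun_nonneg hx.le
    have hv := vpos hx
    positivity

lemma hfun_convex : ConvexOn ℝ (Ioi (0:ℝ)) hfun := by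
  apply MonotoneOn.convexOn_of_deriv (convex_Ioi 0)
  · exact fun x hx => ((hfun_hasDerivAt hx).continuousAt).continuousWithinAt
  · intro x hx
    rw [interior_Ioi] at hx
    exact ((hfun_hasDerivAt hx).differentiableAt).differentiableWithinAt
  · rw [interior_Ioi]
    intro x hx y hy hxy
    rw [(hfun_hasDerivAt hx).deriv, (hfun_hasDerivAt hy).deriv]
    exact hderiv_mono hx hy hxy

lemma tangent_le {a u : ℝ} (ha : 0 < a) (hu : 0 < u) :
    hfun a + hderiv a * (u - a) ≤ hfun u := by
  rcases lt_trichotomy u a with h | h | h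
  · have hs := hfun_convex.slope_le_of_hasDerivAt (mem_Ioi.2 hu) (mem_Ioi.2 ha) h
      (hfun_hasDerivAt ha)
    rw [slope_def_field] at hs
    have hau : 0 < a - u := by linarith
    rw [div_le_iff₀ hau] at hs
    nlinarith
  · subst h; simp
  · have hs := hfun_convex.le_slope_of_hasDerivAt (mem_Ioi.2 ha) (mem_Ioi.2 hu) h
      (hfun_hasDerivAt ha)
    rw [slope_def_field] at hs
    have hau : 0 < u - a := by linarith
    rw [le_div_iff₀ hau] at hs
    nlinarith

lemma zero_tangent {a : ℝ} (ha : 0 < a) : hfun a - hderiv a * a < 1 := by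
  have hv := vpos ha
  have hsinh := (Real.self_lt_sinh_iff.2 (by linarith : 0 < a / 2))
  rw [Real.sinh_eq] at hsinh
  have h1 : a * Real.exp (-(a/2)) < 1 - Real.exp (-a) := by
    have hE : 0 < Real.exp (-(a/2)) := Real.exp_pos _
    have := mul_lt_mul_of_pos_right (by linarith : a < Real.exp (a/2) - Real.exp (-(a/2))) hE
    calc a * Real.exp (-(a/2)) < (Real.exp (a/2) - Real.exp (-(a/2))) * Real.exp (-(a/2)) := this
      _ = 1 - Real.exp (-a) := by
          have e1 : Real.exp (a/2) * Real.exp (-(a/2)) = 1 := by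
            rw [← Real.exp_add]; norm_num
          have e2 : Real.exp (-(a/2)) * Real.exp (-(a/2)) = Real.exp (-a) := by
            rw [← Real.exp_add]; congr 1; ring
          rw [sub_mul, e1, e2]
  have hkey : a ^ 2 * Real.exp (-a) < (1 - Real.exp (-a)) ^ 2 := by
    have hE : 0 ≤ a * Real.exp (-(a/2)) := by positivity
    have := mul_self_lt_mul_self hE h1
    have e2 : Real.exp (-(a/2)) * Real.exp (-(a/2)) = Real.exp (-a) := by
      rw [← Real.exp_add]; congr 1; ring
    calc a ^ 2 * Real.exp (-a) = (a * Real.exp (-(a/2))) * (a * Real.exp (-(a/2))) := by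
          rw [show a * Real.exp (-(a/2)) * (a * Real.exp (-(a/2)))
              = a^2 * (Real.exp (-(a/2)) * Real.exp (-(a/2))) from by ring, e2]
      _ < (1 - Real.exp (-a)) * (1 - Real.exp (-a)) := this
      _ = (1 - Real.exp (-a)) ^ 2 := by ring
  have heq : hfun a - hderiv a * a = a ^ 2 * Real.exp (-a) / (1 - Real.exp (-a)) ^ 2 := by
    unfold hfun hderiv
    field_simp
    ring
  rw [heq]
  rw [div_lt_one (by positivity)]
  exact hkey


lemma sumgeom {y : ℝ} (hy0 : 0 < y) (hy1 : y < 1) :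
    Summable (fun k : ℕ => y ^ (k+1)) := by
  simpa only [pow_succ] using (summable_geometric_of_lt_one hy0.le hy1).mul_right y

lemma T1 {y : ℝ} (hy0 : 0 < y) (hy1 : y < 1) :
    ∑' k : ℕ, y ^ (k+1) = y / (1-y) := by
  simp only [pow_succ]
  rw [tsum_mul_right, tsum_geometric_of_lt_one hy0.le hy1, inv_mul_eq_div]

lemma sumlin {y : ℝ} (hy0 : 0 < y) (hy1 : y < 1) :
    Summable (fun k : ℕ => ((k:ℝ)+1) * y ^ (k+1)) := by
  have hnorm : ‖y‖ < 1 := by rw [Real.norm_eq_abs, abs_of_pos hy0]; exact hy1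
  have hs := (hasSum_coe_mul_geometric_of_norm_lt_one hnorm).summable
  have := (summable_nat_add_iff 1).2 hs
  refine this.congr (fun k => ?_)
  push_cast
  ring

lemma T2 {y : ℝ} (hy0 : 0 < y) (hy1 : y < 1) :
    ∑' k : ℕ, ((k:ℝ)+1) * y ^ (k+1) = y / (1-y)^2 := by
  have hnorm : ‖y‖ < 1 := by rw [Real.norm_eq_abs, abs_of_pos hy0]; exact hy1
  have hS := hasSum_coe_mul_geometric_of_norm_lt_one hnorm
  have heq := hS.tsum_eq
  rw [Summable.tsum_eq_zero_add hS.summable] at heq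
  push_cast at heq
  simpa using heq

lemma key_ineq {t y : ℝ} (ht : 0 < t) (hy0 : 0 < y) (hy1 : y < 1) :
    hfun (t*y/(1-y)) / (1-y) < 1 + ∑' k : ℕ, hfun (t*((k:ℝ)+1)) * y ^ (k+1) := by
  have h1y : 0 < 1 - y := by linarith
  set a := t*y/(1-y) with ha_def
  have ha : 0 < a := by positivity
  have ha_eq : a * (1-y) = t*y := by rw [ha_def]; field_simp
  set H := hfun a
  set Dv := hderiv a
  -- summability facts
  have hgeom := sumgeom hy0 hy1
  have hlin := sumlin hy0 hy1
  have htk : ∀ k : ℕ, 0 < t*((k:ℝ)+1) := by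
    intro k; positivity
  have hhpos : ∀ k : ℕ, 0 ≤ hfun (t*((k:ℝ)+1)) := by
    intro k
    exact le_of_lt (div_pos (htk k) (vpos (htk k)))
  have hbound : ∀ k : ℕ, hfun (t*((k:ℝ)+1)) * y^(k+1)
      ≤ (t/(1 - Real.exp (-t))) * (((k:ℝ)+1) * y^(k+1)) := by
    intro k
    have hvt := vpos ht
    have hvk := vpos (htk k)
    have hmono : 1 - Real.exp (-t) ≤ 1 - Real.exp (-(t*((k:ℝ)+1))) := by
      have : -(t*((k:ℝ)+1)) ≤ -t := by nlinarith [Nat.cast_nonneg (α := ℝ) k]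
      have := Real.exp_le_exp.2 this
      linarith
    have h1 : hfun (t*((k:ℝ)+1)) ≤ t*((k:ℝ)+1) / (1 - Real.exp (-t)) := by
      unfold hfun
      exact div_le_div_of_nonneg_left (htk k).le hvt hmono
    calc hfun (t*((k:ℝ)+1)) * y^(k+1) ≤ (t*((k:ℝ)+1) / (1 - Real.exp (-t))) * y^(k+1) :=
          mul_le_mul_of_nonneg_right h1 (pow_nonneg hy0.le _)
      _ = (t/(1 - Real.exp (-t))) * (((k:ℝ)+1) * y^(k+1)) := by ring
  have hsummand : Summable (fun k : ℕ => hfun (t*((k:ℝ)+1)) * y^(k+1)) := by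
    apply Summable.of_nonneg_of_le
      (fun k => mul_nonneg (hhpos k) (pow_nonneg hy0.le _)) hbound
    exact hlin.mul_left _
  have hLHSsum : Summable (fun k : ℕ =>
      (H - Dv*a) * y^(k+1) + (Dv*t) * (((k:ℝ)+1) * y^(k+1))) :=
    (hgeom.mul_left _).add (hlin.mul_left _)
  have htang : ∀ k : ℕ,
      (H - Dv*a) * y^(k+1) + (Dv*t) * (((k:ℝ)+1) * y^(k+1))
      ≤ hfun (t*((k:ℝ)+1)) * y^(k+1) := by
    intro k
    calc (H - Dv*a) * y^(k+1) + (Dv*t) * (((k:ℝ)+1) * y^(k+1))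
        = (H + Dv * (t*((k:ℝ)+1) - a)) * y^(k+1) := by ring
      _ ≤ hfun (t*((k:ℝ)+1)) * y^(k+1) :=
          mul_le_mul_of_nonneg_right (tangent_le ha (htk k)) (pow_nonneg hy0.le _)
  have hsum_le := Summable.tsum_le_tsum htang hLHSsum hsummand
  have hval : ∑' k : ℕ, ((H - Dv*a) * y^(k+1) + (Dv*t) * (((k:ℝ)+1) * y^(k+1)))
      = (H - Dv*a) * (y/(1-y)) + (Dv*t) * (y/(1-y)^2) := by
    rw [Summable.tsum_add (hgeom.mul_left _) (hlin.mul_left _), tsum_mul_left, tsum_mul_left,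
      T1 hy0 hy1, T2 hy0 hy1]
  rw [hval] at hsum_le
  have hzt : H - Dv * a < 1 := zero_tangent ha
  have hiden : 1 + ((H - Dv*a) * (y/(1-y)) + (Dv*t) * (y/(1-y)^2)) - H/(1-y)
      = 1 - (H - Dv*a) := by
    rw [ha_def]
    field_simp
    ring
  have : H/(1-y) < 1 + ((H - Dv*a) * (y/(1-y)) + (Dv*t) * (y/(1-y)^2)) := by linarith
  linarith


noncomputable def gterm (t : ℝ) (k : ℕ) (x : ℝ) : ℝ :=
  Real.exp (-(t*((k:ℝ)+1)*x)) / (1 - Real.exp (-(t*((k:ℝ)+1))))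
noncomputable def gderiv (t : ℝ) (k : ℕ) (x : ℝ) : ℝ :=
  -(t*((k:ℝ)+1) * Real.exp (-(t*((k:ℝ)+1)*x)) / (1 - Real.exp (-(t*((k:ℝ)+1)))))
noncomputable def Fsum (t x : ℝ) : ℝ := ∑' k : ℕ, gterm t k x

lemma tkpos {t : ℝ} (ht : 0 < t) (k : ℕ) : 0 < t * ((k:ℝ)+1) := by positivity

lemma gterm_hasDerivAt {t : ℝ} (k : ℕ) (x : ℝ) :
    HasDerivAt (gterm t k) (gderiv t k x) x := by
  set c := t*((k:ℝ)+1)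
  have hin : HasDerivAt (fun x : ℝ => -(c*x)) (-c) x := by
    exact ((hasDerivAt_id x).const_mul c).neg |>.congr_deriv (by simp)
  have hexp : HasDerivAt (fun x : ℝ => Real.exp (-(c*x)))
      (Real.exp (-(c*x)) * -c) x := (Real.hasDerivAt_exp _).comp x hin
  have := hexp.div_const (1 - Real.exp (-c))
  refine this.congr_deriv ?_
  unfold gderiv
  ring

lemma exp_pow_eq {c x : ℝ} (k : ℕ) : Real.exp (-(c*((k:ℝ)+1)*x)) = Real.exp (-(c*x)) ^ (k+1) := by
  rw [← Real.exp_nat_mul]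
  congr 1
  push_cast
  ring

lemma gbound {t : ℝ} (ht : 0 < t) {b : ℝ} (hb : 0 < b) (k : ℕ) (x : ℝ) (hx : x ∈ Ioi b) :
    ‖gderiv t k x‖ ≤ (t / (1 - Real.exp (-t))) * (((k:ℝ)+1) * (Real.exp (-(t*b))) ^ (k+1)) := by
  have hvk := vpos (tkpos ht k)
  have hvt := vpos ht
  have hxb : b < x := hx
  have hexple : Real.exp (-(t*((k:ℝ)+1)*x)) ≤ Real.exp (-(t*b)) ^ (k+1) := by
    rw [← exp_pow_eq k]
    apply Real.exp_le_exp.2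
    have h2 : (t*((k:ℝ)+1))*b ≤ (t*((k:ℝ)+1))*x :=
      mul_le_mul_of_nonneg_left hxb.le (by positivity)
    nlinarith [h2]
  have hmono : 1 - Real.exp (-t) ≤ 1 - Real.exp (-(t*((k:ℝ)+1))) := by
    have h1 : -(t*((k:ℝ)+1)) ≤ -t := by nlinarith [Nat.cast_nonneg (α := ℝ) k]
    have := Real.exp_le_exp.2 h1
    linarith
  have hnorm : ‖gderiv t k x‖
      = t*((k:ℝ)+1) * Real.exp (-(t*((k:ℝ)+1)*x)) / (1 - Real.exp (-(t*((k:ℝ)+1)))) := by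
    unfold gderiv
    rw [norm_neg, Real.norm_eq_abs, abs_of_nonneg]
    positivity
  rw [hnorm]
  calc t*((k:ℝ)+1) * Real.exp (-(t*((k:ℝ)+1)*x)) / (1 - Real.exp (-(t*((k:ℝ)+1))))
      ≤ t*((k:ℝ)+1) * Real.exp (-(t*b)) ^ (k+1) / (1 - Real.exp (-t)) := by
        apply div_le_div₀ (by positivity) ?_ hvt hmono
        have : (0:ℝ) ≤ t*((k:ℝ)+1) := by positivity
        exact mul_le_mul_of_nonneg_left hexple this
    _ = (t / (1 - Real.exp (-t))) * (((k:ℝ)+1) * (Real.exp (-(t*b))) ^ (k+1)) := by ring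

lemma gsummable {t : ℝ} (ht : 0 < t) {x : ℝ} (hx : 0 < x) :
    Summable (fun k : ℕ => gterm t k x) := by
  have hy0 : 0 < Real.exp (-(t*x)) := Real.exp_pos _
  have hy1 : Real.exp (-(t*x)) < 1 := by
    rw [Real.exp_lt_one_iff]; nlinarith
  apply Summable.of_nonneg_of_le ?_ ?_ ((sumgeom hy0 hy1).mul_left (1/(1 - Real.exp (-t))))
  · intro k
    have := vpos (tkpos ht k)
    unfold gterm
    positivity
  · intro k
    have hvk := vpos (tkpos ht k)
    have hvt := vpos ht
    have hmono : 1 - Real.exp (-t) ≤ 1 - Real.exp (-(t*((k:ℝ)+1))) := by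
      have h1 : -(t*((k:ℝ)+1)) ≤ -t := by nlinarith [Nat.cast_nonneg (α := ℝ) k]
      have := Real.exp_le_exp.2 h1
      linarith
    calc gterm t k x = Real.exp (-(t*x))^(k+1) / (1 - Real.exp (-(t*((k:ℝ)+1)))) := by
          rw [gterm, exp_pow_eq k]
      _ ≤ Real.exp (-(t*x))^(k+1) / (1 - Real.exp (-t)) :=
          div_le_div_of_nonneg_left (by positivity) hvt hmono
      _ = (1/(1 - Real.exp (-t))) * Real.exp (-(t*x))^(k+1) := by ring

lemma Fsum_hasDerivAt {t : ℝ} (ht : 0 < t) {x₀ : ℝ} (hx₀ : 0 < x₀) :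
    HasDerivAt (Fsum t) (∑' k : ℕ, gderiv t k x₀) x₀ := by
  have hb : 0 < x₀/2 := by linarith
  have hy0 : 0 < Real.exp (-(t*(x₀/2))) := Real.exp_pos _
  have hy1 : Real.exp (-(t*(x₀/2))) < 1 := by
    rw [Real.exp_lt_one_iff]; nlinarith
  have hvt := vpos ht
  have husum : Summable (fun k : ℕ =>
      (t / (1 - Real.exp (-t))) * (((k:ℝ)+1) * (Real.exp (-(t*(x₀/2)))) ^ (k+1))) :=
    (sumlin hy0 hy1).mul_left _
  refine hasDerivAt_of_tendstoUniformlyOn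
    (f := fun N x => ∑ k ∈ Finset.range N, gterm t k x)
    (f' := fun N x => ∑ k ∈ Finset.range N, gderiv t k x) (isOpen_Ioi (a := x₀/2))
    (tendstoUniformlyOn_tsum_nat husum (fun k x hx => gbound ht hb k x hx))
    (Eventually.of_forall ?_) ?_ (by simpa using half_lt_self hx₀)
  · intro N x hx
    exact HasDerivAt.fun_sum (fun k _ => gterm_hasDerivAt k x)
  · intro x hx
    have hx' : 0 < x := lt_trans hb hx
    exact ((gsummable ht hx').hasSum).tendsto_sum_nat


noncomputable def phihat (t c x : ℝ) : ℝ :=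
  -c + t * (x - 1/2 - Fsum t x) +
    Real.log (Real.exp (t / (Real.exp (t*x) - 1)) - 1)

lemma phihat_deriv_pos {t : ℝ} (c : ℝ) (ht : 0 < t) {x₀ : ℝ} (hx₀ : 0 < x₀) :
    ∃ V, HasDerivAt (phihat t c) V x₀ ∧ 0 < V := by
  have hE : HasDerivAt (fun x : ℝ => Real.exp (t*x)) (Real.exp (t*x₀) * (t*1)) x₀ := by
    exact (Real.hasDerivAt_exp (t*x₀)).comp x₀ ((hasDerivAt_id x₀).const_mul t)
  have hEgt : 1 < Real.exp (t*x₀) := by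
    have := Real.exp_lt_exp.2 (show (0:ℝ) < t*x₀ by positivity)
    rwa [Real.exp_zero] at this
  have hden : 0 < Real.exp (t*x₀) - 1 := by linarith
  set Aval := t / (Real.exp (t*x₀) - 1) with hAval_def
  set Ad := -(t * (Real.exp (t*x₀) * t)) / (Real.exp (t*x₀) - 1)^2 with hAd_def
  have hA : HasDerivAt (fun x : ℝ => t / (Real.exp (t*x) - 1)) Ad x₀ := by
    have := (hasDerivAt_const x₀ t).div (hE.sub_const 1) hden.ne'
    refine this.congr_deriv ?_
    rw [hAd_def]
    ring
  have hApos : 0 < Aval := div_pos ht hden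
  have hexpA : HasDerivAt (fun x : ℝ => Real.exp (t / (Real.exp (t*x) - 1)))
      (Real.exp Aval * Ad) x₀ := by
    have h := (Real.hasDerivAt_exp Aval).comp x₀ hA
    exact h
  have hEa : 1 < Real.exp Aval := by
    have := Real.exp_lt_exp.2 hApos
    rwa [Real.exp_zero] at this
  have hG : HasDerivAt (fun x : ℝ => Real.log (Real.exp (t / (Real.exp (t*x) - 1)) - 1))
      ((Real.exp Aval * Ad) / (Real.exp Aval - 1)) x₀ := by
    have h1 := (hexpA.sub_const 1).log (by linarith : Real.exp Aval - 1 ≠ 0)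
    convert h1 using 1
  have hF := Fsum_hasDerivAt ht hx₀
  set Fd := ∑' k : ℕ, gderiv t k x₀ with hFd_def
  have hmid : HasDerivAt (fun x : ℝ => t * (x - 1/2 - Fsum t x)) (t * (1 - Fd)) x₀ := by
    have := (((hasDerivAt_id x₀).sub_const (1/2)).sub hF).const_mul t
    simpa using this
  have htotal : HasDerivAt (phihat t c)
      (t * (1 - Fd) + (Real.exp Aval * Ad) / (Real.exp Aval - 1)) x₀ := by
    have h0 : HasDerivAt (phihat t c)
        ((0 + t * (1 - Fd)) + (Real.exp Aval * Ad) / (Real.exp Aval - 1)) x₀ :=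
      ((hasDerivAt_const x₀ (-c)).add hmid).add hG
    simpa using h0
  refine ⟨_, htotal, ?_⟩
  -- now positivity
  set y := Real.exp (-(t*x₀)) with hy_def
  have hy0 : 0 < y := Real.exp_pos _
  have hy1 : y < 1 := by
    rw [hy_def, Real.exp_lt_one_iff]
    nlinarith
  have h1y : 0 < 1 - y := by linarith
  have hyE : Real.exp (t*x₀) = y⁻¹ := by
    rw [hy_def, Real.exp_neg, inv_inv]
  have hFd : Fd = -(∑' k : ℕ, hfun (t*((k:ℝ)+1)) * y^(k+1)) := by
    rw [hFd_def, ← tsum_neg]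
    apply tsum_congr
    intro k
    rw [gderiv, hy_def, ← exp_pow_eq k, hfun]
    ring
  have ha_eq : Aval = t*y/(1-y) := by
    rw [hAval_def, hyE]
    rw [show y⁻¹ - 1 = (1-y)/y by field_simp]
    rw [div_div_eq_mul_div]
  have h2 : y⁻¹ - 1 ≠ 0 := by
    rw [show y⁻¹ - 1 = (1-y)/y by field_simp]
    positivity
  have hAd2 : Ad = -(t^2 * y/(1-y)^2) := by
    rw [hAd_def, hyE]
    field_simp
  have hGval : (Real.exp Aval * Ad) / (Real.exp Aval - 1)
      = -(t * (hfun (t*y/(1-y)) / (1-y))) := by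
    have hinv : 1 - (Real.exp Aval)⁻¹ = (Real.exp Aval - 1)/Real.exp Aval := by
      field_simp
    rw [← ha_eq, hfun, Real.exp_neg, hinv, hAd2, ha_eq]
    have hEne : Real.exp (t*y/(1-y)) ≠ 0 := (Real.exp_pos _).ne'
    have hE1ne : Real.exp (t*y/(1-y)) - 1 ≠ 0 := by
      rw [← ha_eq]; linarith
    field_simp
  have hkey := key_ineq ht hy0 hy1
  rw [hFd, hGval]
  set S := ∑' k : ℕ, hfun (t*((k:ℝ)+1)) * y^(k+1)
  have hpos : 0 < t * ((1 + S) - hfun (t*y/(1-y))/(1-y)) :=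
    mul_pos ht (by linarith)
  nlinarith [hpos]

/-- For `q > 1`, `φ̃_q(x) = ψ_q(x) + ln(exp((ln q)/(qˣ − 1)) − 1)` is strictly
increasing on `(0, ∞)`. -/
theorem varphi_strictMonoOn (q : ℝ) (hq : 1 < q) :
    StrictMonoOn
      (fun x => qDigammaGt q x +
        Real.log (Real.exp (Real.log q / (q ^ x - 1)) - 1))
      (Set.Ioi 0) := by
  have hq0 : (0:ℝ) < q := by linarith
  have ht : 0 < Real.log q := Real.log_pos hq
  have hEq : ∀ x : ℝ, qDigammaGt q x +
      Real.log (Real.exp (Real.log q / (q ^ x - 1)) - 1)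
      = phihat (Real.log q) (Real.log (q-1)) x := by
    intro x
    have hsum : ∀ k : ℕ, q ^ (-(((k : ℝ) + 1) * x)) / (1 - q ^ (-((k : ℝ) + 1)))
        = gterm (Real.log q) k x := by
      intro k
      rw [gterm, Real.rpow_def_of_pos hq0, Real.rpow_def_of_pos hq0]
      congr 2
      · ring
      · congr 1
        ring
    have hx : (q : ℝ) ^ x = Real.exp (Real.log q * x) := Real.rpow_def_of_pos hq0 x
    rw [qDigammaGt, phihat, Fsum, tsum_congr hsum, hx]
  have hmono : StrictMonoOn (phihat (Real.log q) (Real.log (q-1))) (Ioi 0) := by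
    apply strictMonoOn_of_deriv_pos (convex_Ioi 0)
    · intro x hx
      obtain ⟨V, hV, _⟩ := phihat_deriv_pos (Real.log (q-1)) ht hx
      exact hV.differentiableAt.continuousAt.continuousWithinAt
    · intro x hx
      rw [interior_Ioi] at hx
      obtain ⟨V, hV, hVpos⟩ := phihat_deriv_pos (Real.log (q-1)) ht hx
      rwa [hV.deriv]
  intro a ha b hb hab
  have := hmono ha hb hab
  simp only []
  rw [hEq a, hEq b]
  exact this
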